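/- Under the double-exponential tail assumption on $F_h$ (class $\mathcal{C}$ tail with parameters $\alpha,\beta,n,l,H$) and for fixed $\lambda>0$, let $X^\star_N=\frac{1}{\lambda}\max_{1\le i\le N}h_i$ and define $\tilde{R}(N)=\mathbb{E}\left[\log(X^\star_N)\,\mathbf{1}\{X^\star_N\ge 1\}\right]$. Then $\lim_{N\to\infty}\frac{\tilde{R}(N)}{\log\left(\frac{1}{\lambda}\left(\frac{1}{\beta}\log(\alpha N)\right)^{1/n}\right)}=1$. -/

import Mathlib

open MeasureTheory ProbabilityTheory Filter Real Set Topology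
open scoped ENNReal

/-- The maximum of `Y 1, ..., Y N`. -/
noncomputable def maxOver {Ω : Type*} (Y : ℕ → Ω → ℝ) (N : ℕ) (ω : Ω) : ℝ :=
  sSup ((fun i => Y i ω) '' Set.Icc 1 N)

set_option maxHeartbeats 1600000

lemma maxOver_eq_sup' {Ω : Type*} (Y : ℕ → Ω → ℝ) {N : ℕ} (hN : 1 ≤ N) (ω : Ω) :
    maxOver Y N ω = (Finset.Icc 1 N).sup' (Finset.nonempty_Icc.mpr hN) (fun i => Y i ω) := by
  rw [Finset.sup'_eq_csSup_image, maxOver, Finset.coe_Icc]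

lemma maxOver_measurable {Ω : Type*} [MeasurableSpace Ω] {Y : ℕ → Ω → ℝ}
    (hmeas : ∀ i, Measurable (Y i)) (N : ℕ) : Measurable (maxOver Y N) := by
  rcases Nat.eq_zero_or_pos N with hN | hN
  · subst hN
    have : maxOver Y 0 = fun _ => (0 : ℝ) := by
      funext ω
      simp [maxOver, Set.Icc_eq_empty (by norm_num : ¬ (1:ℕ) ≤ 0), Real.sSup_empty]
    rw [this]; exact measurable_const
  · have : maxOver Y N = (Finset.Icc 1 N).sup' (Finset.nonempty_Icc.mpr hN) Y := by
      funext ω; rw [maxOver_eq_sup' Y hN ω, ← Finset.sup'_apply]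
    rw [this]
    exact Finset.measurable_sup' _ (fun i _ => hmeas i)

lemma cdf_ofReal {Ω : Type*} [MeasurableSpace Ω] (μ : Measure Ω) [IsProbabilityMeasure μ]
    {h : ℕ → Ω → ℝ} {F : ℝ → ℝ} (hcdf : ∀ i x, (μ {ω | h i ω ≤ x}).toReal = F x)
    (i : ℕ) (x : ℝ) : μ {ω | h i ω ≤ x} = ENNReal.ofReal (F x) := by
  rw [← hcdf i x, ENNReal.ofReal_toReal (measure_ne_top μ _)]

lemma F_nonneg {Ω : Type*} [MeasurableSpace Ω] (μ : Measure Ω) [IsProbabilityMeasure μ]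
    {h : ℕ → Ω → ℝ} {F : ℝ → ℝ} (hcdf : ∀ i x, (μ {ω | h i ω ≤ x}).toReal = F x)
    (x : ℝ) : 0 ≤ F x := by rw [← hcdf 0 x]; exact ENNReal.toReal_nonneg

lemma F_le_one {Ω : Type*} [MeasurableSpace Ω] (μ : Measure Ω) [IsProbabilityMeasure μ]
    {h : ℕ → Ω → ℝ} {F : ℝ → ℝ} (hcdf : ∀ i x, (μ {ω | h i ω ≤ x}).toReal = F x)
    (x : ℝ) : F x ≤ 1 := by
  rw [← hcdf 0 x]
  exact ENNReal.toReal_le_of_le_ofReal zero_le_one (by simpa using prob_le_one)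

lemma meas_maxOver_le {Ω : Type*} [MeasurableSpace Ω] (μ : Measure Ω) [IsProbabilityMeasure μ]
    {h : ℕ → Ω → ℝ}
    (hindep : iIndepFun h μ)
    {F : ℝ → ℝ} (hcdf : ∀ i x, (μ {ω | h i ω ≤ x}).toReal = F x)
    {N : ℕ} (hN : 1 ≤ N) (x : ℝ) :
    μ {ω | maxOver h N ω ≤ x} = ENNReal.ofReal (F x) ^ N := by
  have hset : {ω | maxOver h N ω ≤ x} = ⋂ i ∈ Finset.Icc 1 N, {ω | h i ω ≤ x} := by
    ext ω
    simp only [Set.mem_setOf_eq, Set.mem_iInter, maxOver_eq_sup' h hN ω, Finset.sup'_le_iff]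
  rw [hset, hindep.meas_biInter (S := Finset.Icc 1 N) (s := fun i => {ω | h i ω ≤ x})
    (fun i _ => ⟨Set.Iic x, measurableSet_Iic, rfl⟩)]
  simp [cdf_ofReal μ hcdf, Finset.prod_const, Nat.card_Icc]

lemma meas_maxOver_gt {Ω : Type*} [MeasurableSpace Ω] (μ : Measure Ω) [IsProbabilityMeasure μ]
    {h : ℕ → Ω → ℝ} (hmeas : ∀ i, Measurable (h i))
    {F : ℝ → ℝ} (hcdf : ∀ i x, (μ {ω | h i ω ≤ x}).toReal = F x)
    {N : ℕ} (hN : 1 ≤ N) (x : ℝ) :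
    μ {ω | x < maxOver h N ω} ≤ (N : ℝ≥0∞) * ENNReal.ofReal (1 - F x) := by
  have hsub : {ω | x < maxOver h N ω} ⊆ ⋃ i ∈ Finset.Icc 1 N, {ω | x < h i ω} := by
    intro ω hω
    simp only [Set.mem_setOf_eq, maxOver_eq_sup' h hN ω, Finset.lt_sup'_iff] at hω
    obtain ⟨i, hi, hix⟩ := hω
    exact Set.mem_biUnion hi hix
  refine (measure_mono hsub).trans ((measure_biUnion_finset_le _ _).trans ?_)
  have key : ∀ i, μ {ω | x < h i ω} = ENNReal.ofReal (1 - F x) := by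
    intro i
    have hc : {ω | x < h i ω} = {ω | h i ω ≤ x}ᶜ := by ext ω; simp [not_le]
    rw [hc, measure_compl (measurableSet_le (hmeas i) measurable_const) (measure_ne_top μ _),
      cdf_ofReal μ hcdf, measure_univ,
      ENNReal.ofReal_sub _ (F_nonneg μ hcdf x), ENNReal.ofReal_one]
  have : (∑ i ∈ Finset.Icc 1 N, μ {ω | x < h i ω})
      = (Finset.Icc 1 N).card • ENNReal.ofReal (1 - F x) := by
    rw [Finset.sum_congr rfl fun i _ => key i, Finset.sum_const]
  rw [this]
  simp [Nat.card_Icc, nsmul_eq_mul]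

lemma aux_integral_exp_neg_mul {b : ℝ} (hb : 0 < b) :
    ∫ t in Set.Ioi (0:ℝ), Real.exp (-(b * t)) = 1 / b := by
  have := MeasureTheory.integral_comp_mul_left_Ioi (fun x => Real.exp (-x)) 0 hb
  simp only [mul_zero] at this
  rw [this, integral_exp_neg_Ioi_zero, smul_eq_mul, mul_one, one_div]

lemma lower_est {Ω : Type*} [MeasurableSpace Ω] (μ : Measure Ω) [IsProbabilityMeasure μ]
    {Y : Ω → ℝ} (hYm : Measurable Y) (hInt : Integrable Y μ) (hY0 : ∀ ω, 0 ≤ Y ω)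
    {b : ℝ} (hb : 0 ≤ b) :
    b * (μ {ω | b ≤ Y ω}).toReal ≤ ∫ ω, Y ω ∂μ := by
  have hS : MeasurableSet {ω | b ≤ Y ω} := measurableSet_le measurable_const hYm
  have heq : ∫ ω, Set.indicator {ω | b ≤ Y ω} (fun _ => b) ω ∂μ
      = (μ {ω | b ≤ Y ω}).toReal * b := by
    rw [integral_indicator_const _ hS]; simp [smul_eq_mul, measureReal_def]
  rw [mul_comm, ← heq]
  refine integral_mono ((integrable_const b).indicator hS) hInt ?_
  intro ω
  by_cases hω : ω ∈ {ω | b ≤ Y ω}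
  · simpa [Set.indicator_of_mem hω] using hω
  · simpa [Set.indicator_of_notMem hω] using hY0 ω

lemma upper_est {Ω : Type*} [MeasurableSpace Ω] (μ : Measure Ω) [IsProbabilityMeasure μ]
    {Y : Ω → ℝ} (hYm : Measurable Y) (hY0 : ∀ ω, 0 ≤ Y ω)
    {c K r : ℝ} (hc : 0 ≤ c) (hK : 0 ≤ K) (hr : 0 < r)
    (hbound : ∀ t : ℝ, 0 < t → μ {ω | c + t < Y ω} ≤ ENNReal.ofReal (K * Real.exp (-(r * t)))) :
    Integrable Y μ ∧ ∫ ω, Y ω ∂μ ≤ c + K / r := by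
  set Z : Ω → ℝ := fun ω => max (Y ω - c) 0 with hZdef
  have hZm : Measurable Z := (hYm.sub measurable_const).max measurable_const
  have hZ0 : ∀ ω, 0 ≤ Z ω := fun ω => le_max_right _ _
  have hZcake : ∫⁻ ω, ENNReal.ofReal (Z ω) ∂μ = ∫⁻ t in Set.Ioi 0, μ {ω | t < Z ω} :=
    lintegral_eq_lintegral_meas_lt μ (Eventually.of_forall hZ0) hZm.aemeasurable
  have hsets : ∀ t : ℝ, 0 < t → {ω | t < Z ω} = {ω | c + t < Y ω} := by
    intro t ht; ext ω
    simp only [hZdef, Set.mem_setOf_eq, lt_max_iff]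
    constructor
    · rintro (h1 | h2) <;> linarith
    · intro h1; left; linarith
  have hIg : IntegrableOn (fun t => K * Real.exp (-(r * t))) (Set.Ioi 0) := by
    have := (exp_neg_integrableOn_Ioi 0 hr).const_mul K
    simpa [neg_mul, IntegrableOn] using this
  have hIval : ∫ t in Set.Ioi 0, K * Real.exp (-(r * t)) = K / r := by
    rw [MeasureTheory.integral_const_mul, aux_integral_exp_neg_mul hr, mul_one_div]
  have hbnd : ∫⁻ ω, ENNReal.ofReal (Z ω) ∂μ ≤ ENNReal.ofReal (K / r) := by
    rw [hZcake]
    have hmono : ∫⁻ t in Set.Ioi 0, μ {ω | t < Z ω}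
        ≤ ∫⁻ t in Set.Ioi 0, ENNReal.ofReal (K * Real.exp (-(r * t))) := by
      have hgm : Measurable fun t : ℝ => ENNReal.ofReal (K * Real.exp (-(r * t))) :=
        ENNReal.measurable_ofReal.comp
          (measurable_const.mul ((Real.measurable_exp.comp (measurable_const.mul measurable_id').neg)))
      refine setLIntegral_mono hgm ?_
      intro t ht
      rw [hsets t ht]
      exact hbound t ht
    refine hmono.trans ?_
    rw [← ofReal_integral_eq_lintegral_ofReal hIg
      (Eventually.of_forall fun t => mul_nonneg hK (Real.exp_nonneg _)), hIval]
  have hZint : Integrable Z μ := by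
    refine ⟨hZm.aestronglyMeasurable, ?_⟩
    rw [hasFiniteIntegral_iff_ofReal (Eventually.of_forall hZ0)]
    exact lt_of_le_of_lt hbnd ENNReal.ofReal_lt_top
  have hYle : ∀ ω, Y ω ≤ Z ω + c := by
    intro ω
    have := le_max_left (Y ω - c) 0
    simp only [hZdef]; linarith
  have hYint : Integrable Y μ := by
    refine (hZint.add (integrable_const c)).mono' hYm.aestronglyMeasurable ?_
    filter_upwards with ω
    rw [Real.norm_of_nonneg (hY0 ω)]
    exact hYle ω
  refine ⟨hYint, ?_⟩
  have h1 : ∫ ω, Y ω ∂μ ≤ ∫ ω, (Z ω + c) ∂μ :=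
    integral_mono hYint (hZint.add (integrable_const c)) hYle
  rw [integral_add hZint (integrable_const c), integral_const] at h1
  have h2 : ∫ ω, Z ω ∂μ ≤ K / r := by
    rw [integral_eq_lintegral_of_nonneg_ae (Eventually.of_forall hZ0) hZm.aestronglyMeasurable]
    exact ENNReal.toReal_le_of_le_ofReal (div_nonneg hK hr.le) hbnd
  simp only [measure_univ, ENNReal.toReal_one, one_smul, smul_eq_mul, probReal_univ, one_mul] at h1
  linarith

lemma tail_bounds {F : ℝ → ℝ} {α β n l : ℝ} (hα : 0 < α) (hβ : 0 < β) (hn : 0 < n)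
    {H : ℝ → ℝ} (hHo : H =o[atTop] fun x => x ^ n)
    (htail : Tendsto (fun x => (1 - F x) / (α * x ^ l * Real.exp (-β * x ^ n + H x)))
      atTop (𝓝 1)) :
    ∃ x0 : ℝ, 1 ≤ x0 ∧ ∀ x, x0 ≤ x →
      1 - F x ≤ 2 * α * Real.exp (-(β / 2) * x ^ n) ∧
      Real.exp (-(2 * β) * x ^ n) ≤ 1 - F x := by
  have hRatio : ∀ᶠ x in atTop,
      (1 - F x) / (α * x ^ l * Real.exp (-β * x ^ n + H x)) ∈ Set.Ioo (1/2 : ℝ) (3/2) :=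
    htail.eventually_mem (Ioo_mem_nhds (by norm_num) (by norm_num))
  have hlittle : (fun x : ℝ => l * Real.log x + H x) =o[atTop] fun x => x ^ n :=
    ((isLittleO_log_rpow_atTop hn).const_mul_left l).add hHo
  have hE : ∀ᶠ x : ℝ in atTop, |l * Real.log x + H x| ≤ β / 2 * |x ^ n| := by
    have := hlittle.def (by positivity : (0:ℝ) < β / 2)
    simpa [Real.norm_eq_abs] using this
  have htop : Tendsto (fun x : ℝ => β / 2 * x ^ n) atTop atTop :=
    (tendsto_rpow_atTop hn).const_mul_atTop (by positivity)
  have hbig : ∀ᶠ x : ℝ in atTop, max (Real.log (4/3)) (-Real.log (α/2)) ≤ β / 2 * x ^ n :=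
    htop.eventually_ge_atTop _
  obtain ⟨x1, hx1⟩ := eventually_atTop.mp ((hRatio.and hE).and hbig)
  refine ⟨max x1 1, le_max_right _ _, ?_⟩
  intro x hx
  obtain ⟨⟨hio, habs⟩, hC⟩ := hx1 x (le_trans (le_max_left _ _) hx)
  have hx1le : (1:ℝ) ≤ x := le_trans (le_max_right _ _) hx
  have hxpos : (0:ℝ) < x := lt_of_lt_of_le one_pos hx1le
  have hxn : (0:ℝ) ≤ x ^ n := Real.rpow_nonneg hxpos.le n
  rw [abs_of_nonneg hxn] at habs
  have habs' := abs_le.mp habs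
  have hD : 0 < α * x ^ l * Real.exp (-β * x ^ n + H x) := by positivity
  have hDe : α * x ^ l * Real.exp (-β * x ^ n + H x)
      = α * Real.exp (l * Real.log x + H x - β * x ^ n) := by
    rw [Real.rpow_def_of_pos hxpos, mul_assoc, ← Real.exp_add]
    congr 1
    ring
  constructor
  · have h1 : 1 - F x < 3/2 * (α * Real.exp (l * Real.log x + H x - β * x ^ n)) := by
      have h := hio.2
      rw [div_lt_iff₀ hD] at h
      rw [← hDe]
      linarith
    have hexp : Real.exp (l * Real.log x + H x - β * x ^ n) ≤ Real.exp (-(β/2) * x ^ n) := by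
      apply Real.exp_le_exp.mpr
      linarith [habs'.2]
    nlinarith [Real.exp_nonneg (-(β/2) * x ^ n), Real.exp_nonneg (l * Real.log x + H x - β * x ^ n)]
  · have h2 : 1/2 * (α * Real.exp (l * Real.log x + H x - β * x ^ n)) < 1 - F x := by
      have h := hio.1
      rw [lt_div_iff₀ hD] at h
      rw [← hDe]
      linarith
    have hC' : -Real.log (α/2) ≤ β/2 * x ^ n := le_trans (le_max_right _ _) hC
    have hkey : Real.exp (-(2*β) * x ^ n)
        ≤ 1/2 * (α * Real.exp (l * Real.log x + H x - β * x ^ n)) := by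
      have heq : (1:ℝ)/2 * (α * Real.exp (l * Real.log x + H x - β * x ^ n))
          = Real.exp (Real.log (α/2) + (l * Real.log x + H x - β * x ^ n)) := by
        rw [Real.exp_add, Real.exp_log (by positivity)]
        ring
      rw [heq]
      apply Real.exp_le_exp.mpr
      linarith [habs'.1]
    linarith

lemma tendsto_sqrt_atTop' : Tendsto Real.sqrt atTop atTop := by
  apply tendsto_atTop_atTop_of_monotone' (fun a b hab => Real.sqrt_le_sqrt hab)
  rintro ⟨B, hB⟩
  have h1 := hB (Set.mem_range_self ((max B 0 + 1)^2))
  rw [Real.sqrt_sq (by positivity)] at h1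
  have := le_max_left B 0
  linarith

/-- For `X*_N = (1/λ) max_i h_i` with i.i.d. `h i` having a class-𝒞 double-exponential
tail, the truncated expected log `R̃(N) = E[log(X*_N) 1{X*_N ≥ 1}]` satisfies
`R̃(N) / log((1/λ)(log(α N)/β)^(1/n)) → 1`. -/
theorem truncated_log_max_scaling
    {Ω : Type*} [MeasurableSpace Ω] (μ : Measure Ω) [IsProbabilityMeasure μ]
    (h : ℕ → Ω → ℝ) (hmeas : ∀ i, Measurable (h i)) (hnn : ∀ i ω, 0 ≤ h i ω)
    (hindep : iIndepFun h μ)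
    (F : ℝ → ℝ) (hcdf : ∀ i x, (μ {ω | h i ω ≤ x}).toReal = F x)
    (α β n l : ℝ) (hα : 0 < α) (hβ : 0 < β) (hn : 0 < n)
    (H : ℝ → ℝ)
    (hslow : ∀ a > (0 : ℝ), Tendsto (fun x => H (a * x) / H x) atTop (𝓝 1))
    (hHo : H =o[atTop] fun x => x ^ n)
    (htail : Tendsto
      (fun x => (1 - F x) / (α * x ^ l * Real.exp (-β * x ^ n + H x)))
      atTop (𝓝 1))
    (lam : ℝ) (hlam : 0 < lam) :
    Tendsto (fun N : ℕ =>
      (∫ ω, (if 1 ≤ maxOver h N ω / lam then Real.log (maxOver h N ω / lam) else 0) ∂μ) /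
        Real.log ((1 / lam) * (Real.log (α * N) / β) ^ (1 / n)))
      atTop (𝓝 1) := by
  classical
  set YY : ℕ → Ω → ℝ := fun N ω =>
    if 1 ≤ maxOver h N ω / lam then Real.log (maxOver h N ω / lam) else 0 with hYY
  set dd : ℕ → ℝ := fun N =>
    Real.log ((1 / lam) * (Real.log (α * N) / β) ^ (1 / n)) with hdd
  suffices key : Tendsto (fun N : ℕ => (∫ ω, YY N ω ∂μ) / dd N) atTop (𝓝 1) by
    simp only [hYY, hdd] at key
    exact key
  -- basic properties of YY
  have hY0 : ∀ N ω, 0 ≤ YY N ω := by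
    intro N ω
    simp only [hYY]
    split
    · exact Real.log_nonneg ‹_›
    · exact le_refl 0
  have hYm : ∀ N, Measurable (YY N) := by
    intro N
    simp only [hYY]
    have hMm : Measurable (fun ω => maxOver h N ω / lam) :=
      (maxOver_measurable hmeas N).div_const lam
    exact Measurable.ite (measurableSet_le measurable_const hMm)
      (Real.measurable_log.comp hMm) measurable_const
  -- tail bounds
  obtain ⟨x0, hx01, hx0⟩ := tail_bounds hα hβ hn hHo htail
  -- asymptotics of dd
  have hNcast : Tendsto (fun N : ℕ => (N : ℝ)) atTop atTop := tendsto_natCast_atTop_atTop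
  have hlogN : Tendsto (fun N : ℕ => Real.log N) atTop atTop :=
    Real.tendsto_log_atTop.comp hNcast
  have hLtop : Tendsto (fun N : ℕ => Real.log (α * N)) atTop atTop :=
    Real.tendsto_log_atTop.comp (hNcast.const_mul_atTop hα)
  have hdd_eq : ∀ᶠ N : ℕ in atTop,
      dd N = Real.log (1 / lam) + (1 / n) * Real.log (Real.log (α * N) / β) := by
    filter_upwards [hLtop.eventually_gt_atTop 0] with N hL
    simp only [hdd]
    rw [Real.log_mul (by positivity) (Real.rpow_pos_of_pos (by positivity) _).ne',
      Real.log_rpow (by positivity)]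
  have hddtop : Tendsto dd atTop atTop := by
    have h1 : Tendsto (fun N : ℕ => Real.log (Real.log (α * N) / β)) atTop atTop :=
      Real.tendsto_log_atTop.comp (hLtop.atTop_div_const hβ)
    have h2 : Tendsto (fun N : ℕ =>
        Real.log (1 / lam) + (1 / n) * Real.log (Real.log (α * N) / β)) atTop atTop :=
      tendsto_atTop_add_const_left _ _ (h1.const_mul_atTop (by positivity))
    exact Tendsto.congr' (hdd_eq.mono fun N hN => hN.symm) h2
  have hexp_nd : ∀ᶠ N : ℕ in atTop,
      lam ^ n * Real.exp (n * dd N) = Real.log (α * N) / β := by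
    filter_upwards [hLtop.eventually_gt_atTop 0] with N hL
    have hu : (0:ℝ) < Real.log (α * N) / β := by positivity
    have h1 : Real.exp (dd N) = (1 / lam) * (Real.log (α * N) / β) ^ (1 / n) := by
      simp only [hdd]
      rw [Real.exp_log (by positivity)]
    have h2 : Real.exp (n * dd N)
        = ((1 / lam) * (Real.log (α * N) / β) ^ (1 / n)) ^ n := by
      rw [mul_comm n (dd N), Real.exp_mul, h1]
    have h3 : ((1 / lam) * (Real.log (α * N) / β) ^ (1 / n)) ^ n
        = (lam ^ n)⁻¹ * (Real.log (α * N) / β) := by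
      rw [Real.mul_rpow (by positivity) (by positivity), one_div, Real.inv_rpow hlam.le,
        ← Real.rpow_mul hu.le, one_div, inv_mul_cancel₀ hn.ne', Real.rpow_one]
    rw [h2, h3, ← mul_assoc, mul_inv_cancel₀ (Real.rpow_pos_of_pos hlam n).ne', one_mul]
  -- auxiliary sequences
  set bb : ℕ → ℝ := fun N => dd N - Real.sqrt (dd N) with hbb
  set cc : ℕ → ℝ := fun N => dd N + Real.sqrt (dd N) with hcc
  set AA : ℕ → ℝ := fun N => β / 2 * lam ^ n * Real.exp (n * cc N) with hAA
  set TT : ℕ → ℝ := fun N => 2 * α * N * Real.exp (-AA N) / n with hTT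
  set qq : ℕ → ℝ := fun N => (N : ℝ) * (1 - F (lam * Real.exp (bb N))) with hqq
  have hsq : Tendsto (fun N => Real.sqrt (dd N)) atTop atTop :=
    tendsto_sqrt_atTop'.comp hddtop
  have hcctop : Tendsto cc atTop atTop := Filter.Tendsto.atTop_add_atTop hddtop hsq
  have hbbtop : Tendsto bb atTop atTop := by
    apply tendsto_atTop_mono' atTop ?_ (hddtop.atTop_div_const two_pos)
    filter_upwards [hddtop.eventually_ge_atTop 4] with N h4
    have h0 : (0:ℝ) ≤ dd N := by linarith
    have : Real.sqrt (dd N) ≤ dd N / 2 := by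
      have h5 : Real.sqrt (dd N) ≤ Real.sqrt ((dd N / 2) ^ 2) :=
        Real.sqrt_le_sqrt (by nlinarith)
      rwa [Real.sqrt_sq (by linarith)] at h5
    simp only [hbb]
    linarith
  have hAAtop : Tendsto AA atTop atTop :=
    ((Real.tendsto_exp_atTop.comp (hcctop.const_mul_atTop hn)).const_mul_atTop
      (by positivity : (0:ℝ) < β / 2 * lam ^ n)).congr (by
        intro N; simp only [hAA, Function.comp])
  have hcc0 : ∀ᶠ N : ℕ in atTop, 0 ≤ cc N := hcctop.eventually_ge_atTop 0
  have hx0c : ∀ᶠ N : ℕ in atTop, x0 ≤ lam * Real.exp (cc N) := by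
    have := (Real.tendsto_exp_atTop.comp hcctop).const_mul_atTop hlam
    exact this.eventually_ge_atTop x0
  have hA1 : ∀ᶠ N : ℕ in atTop, 1 ≤ AA N := hAAtop.eventually_ge_atTop 1
  have hup : ∀ᶠ N : ℕ in atTop,
      Integrable (YY N) μ ∧ ∫ ω, YY N ω ∂μ ≤ cc N + TT N := by
    filter_upwards [eventually_ge_atTop 1, hcc0, hx0c, hA1] with N hN1 hcc0 hx0c hA1
    have hA0 : (0:ℝ) < AA N := lt_of_lt_of_le one_pos hA1
    have hK0 : (0:ℝ) ≤ 2 * α * N * Real.exp (-AA N) := by positivity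
    have hr0 : (0:ℝ) < n * AA N := by positivity
    have hbound : ∀ t : ℝ, 0 < t → μ {ω | cc N + t < YY N ω}
        ≤ ENNReal.ofReal ((2 * α * N * Real.exp (-AA N)) * Real.exp (-(n * AA N * t))) := by
      intro t ht
      set xt := lam * Real.exp (cc N + t) with hxt
      have hxtpos : 0 < xt := by positivity
      have hsub : {ω | cc N + t < YY N ω} ⊆ {ω | xt < maxOver h N ω} := by
        intro ω hω
        simp only [hYY, Set.mem_setOf_eq] at hω ⊢
        by_cases hcase : 1 ≤ maxOver h N ω / lam
        · rw [if_pos hcase] at hω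
          have hpos : 0 < maxOver h N ω / lam := lt_of_lt_of_le one_pos hcase
          have := (Real.lt_log_iff_exp_lt hpos).mp hω
          rw [hxt]
          rw [lt_div_iff₀ hlam] at this
          linarith [this]
        · rw [if_neg hcase] at hω
          linarith
      refine (measure_mono hsub).trans ?_
      refine (meas_maxOver_gt μ hmeas hcdf hN1 xt).trans ?_
      have hxtx0 : x0 ≤ xt := by
        refine hx0c.trans ?_
        rw [hxt]
        have : Real.exp (cc N) ≤ Real.exp (cc N + t) := Real.exp_le_exp.mpr (by linarith)
        nlinarith [Real.exp_pos (cc N)]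
      have htail1 : 1 - F xt ≤ 2 * α * Real.exp (-(β/2) * xt ^ n) := (hx0 xt hxtx0).1
      have hxtn : (β/2) * xt ^ n = AA N * Real.exp (n * t) := by
        rw [hxt, Real.mul_rpow hlam.le (Real.exp_nonneg _), ← Real.exp_mul]
        simp only [hAA]
        rw [show (cc N + t) * n = n * cc N + n * t by ring, Real.exp_add]
        ring
      have hexpge : AA N + AA N * (n * t) ≤ (β/2) * xt ^ n := by
        rw [hxtn]
        have h5 := Real.add_one_le_exp (n * t)
        nlinarith
      have htail2 : 1 - F xt
          ≤ 2 * α * (Real.exp (-AA N) * Real.exp (-(n * AA N * t))) := by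
        refine htail1.trans ?_
        have : Real.exp (-(β/2) * xt ^ n)
            ≤ Real.exp (-AA N) * Real.exp (-(n * AA N * t)) := by
          rw [← Real.exp_add]
          apply Real.exp_le_exp.mpr
          nlinarith [hexpge]
        nlinarith [Real.exp_pos (-(β/2) * xt ^ n), this]
      calc (N : ℝ≥0∞) * ENNReal.ofReal (1 - F xt)
          ≤ (N : ℝ≥0∞) * ENNReal.ofReal
            (2 * α * (Real.exp (-AA N) * Real.exp (-(n * AA N * t)))) := by
            exact mul_le_mul_right (ENNReal.ofReal_le_ofReal htail2) _
        _ = ENNReal.ofReal ((2 * α * N * Real.exp (-AA N)) * Real.exp (-(n * AA N * t))) := by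
            rw [← ENNReal.ofReal_natCast N, ← ENNReal.ofReal_mul (by positivity)]
            congr 1
            ring
    obtain ⟨hint, hle⟩ := upper_est μ (hYm N) (hY0 N) hcc0 hK0 hr0 hbound
    refine ⟨hint, hle.trans ?_⟩
    have h7 : (2 * α * N * Real.exp (-AA N)) / (n * AA N)
        ≤ 2 * α * N * Real.exp (-AA N) / n := by
      gcongr
      all_goals nlinarith
    simp only [hTT]
    linarith
  -- TT tends to 0
  have hAeq : ∀ᶠ N : ℕ in atTop,
      AA N = 1/2 * Real.log (α * N) * Real.exp (n * Real.sqrt (dd N)) := by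
    filter_upwards [hexp_nd] with N hN
    simp only [hAA, hcc]
    calc β / 2 * lam ^ n * Real.exp (n * (dd N + Real.sqrt (dd N)))
        = β / 2 * (lam ^ n * Real.exp (n * dd N)) * Real.exp (n * Real.sqrt (dd N)) := by
          rw [mul_add, Real.exp_add]; ring
      _ = β / 2 * (Real.log (α * N) / β) * Real.exp (n * Real.sqrt (dd N)) := by rw [hN]
      _ = 1/2 * Real.log (α * N) * Real.exp (n * Real.sqrt (dd N)) := by
          field_simp
  have hkey : Tendsto (fun N : ℕ => Real.log N - AA N) atTop atBot := by
    have hbase : Tendsto (fun N : ℕ => -Real.log N - 2 * Real.log α) atTop atBot := by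
      have h9 : Tendsto (fun N : ℕ => -Real.log N + -(2 * Real.log α)) atTop atBot :=
        tendsto_atBot_add_const_right _ _ (tendsto_neg_atTop_atBot.comp hlogN)
      exact h9.congr (fun N => by ring)
    refine tendsto_atBot_mono' atTop ?_ hbase
    · have hE4 : ∀ᶠ N : ℕ in atTop, (4:ℝ) ≤ Real.exp (n * Real.sqrt (dd N)) :=
        (Real.tendsto_exp_atTop.comp (hsq.const_mul_atTop hn)).eventually_ge_atTop 4
      filter_upwards [hAeq, hE4, eventually_ge_atTop 1, hLtop.eventually_ge_atTop 0]
        with N hA hE4 hN1 hL0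
      have hLsplit : Real.log (α * N) = Real.log α + Real.log N := by
        rw [Real.log_mul hα.ne' (by exact_mod_cast Nat.one_le_iff_ne_zero.mp hN1)]
      have hAA2 : 2 * Real.log (α * N) ≤ AA N := by
        rw [hA]; nlinarith
      rw [hLsplit] at hAA2
      show Real.log N - AA N ≤ -Real.log N - 2 * Real.log α
      linarith
  have hTT0 : Tendsto TT atTop (𝓝 0) := by
    have h1 : Tendsto (fun N : ℕ => 2 * α / n * Real.exp (Real.log N - AA N)) atTop (𝓝 0) := by
      have h2 := Real.tendsto_exp_atBot.comp hkey
      have h3 := h2.const_mul (2 * α / n)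
      simpa using h3
    apply Tendsto.congr' ?_ h1
    filter_upwards [eventually_ge_atTop 1] with N hN1
    have hNpos : (0:ℝ) < N := by exact_mod_cast hN1
    simp only [hTT]
    rw [Real.exp_sub, Real.exp_log hNpos, Real.exp_neg]
    ring
  -- qq tends to infinity
  have hxb : ∀ᶠ N : ℕ in atTop, x0 ≤ lam * Real.exp (bb N) :=
    ((Real.tendsto_exp_atTop.comp hbbtop).const_mul_atTop hlam).eventually_ge_atTop x0
  have hxbn : ∀ᶠ N : ℕ in atTop,
      2 * β * (lam * Real.exp (bb N)) ^ n
        = 2 * Real.log (α * N) * Real.exp (-(n * Real.sqrt (dd N))) := by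
    filter_upwards [hexp_nd] with N hN
    rw [Real.mul_rpow hlam.le (Real.exp_nonneg _), ← Real.exp_mul]
    simp only [hbb]
    calc 2 * β * (lam ^ n * Real.exp ((dd N - Real.sqrt (dd N)) * n))
        = 2 * β * ((lam ^ n * Real.exp (n * dd N)) * Real.exp (-(n * Real.sqrt (dd N)))) := by
          rw [show (dd N - Real.sqrt (dd N)) * n = n * dd N + -(n * Real.sqrt (dd N)) by ring,
            Real.exp_add]
          ring
      _ = 2 * Real.log (α * N) * Real.exp (-(n * Real.sqrt (dd N))) := by
          rw [hN]; field_simp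
  have hEsmall : ∀ᶠ N : ℕ in atTop, Real.exp (-(n * Real.sqrt (dd N))) ≤ 1/8 := by
    have h2 : Tendsto (fun N : ℕ => Real.exp (-(n * Real.sqrt (dd N)))) atTop (𝓝 0) :=
      Real.tendsto_exp_atBot.comp (tendsto_neg_atTop_atBot.comp (hsq.const_mul_atTop hn))
    exact h2.eventually (eventually_le_nhds (by norm_num))
  have hqtop : Tendsto qq atTop atTop := by
    have hbase : Tendsto (fun N : ℕ => Real.exp (3/4 * Real.log N + -(1/4) * Real.log α))
        atTop atTop :=
      Real.tendsto_exp_atTop.comp (tendsto_atTop_add_const_right _ (-(1/4) * Real.log α)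
        (hlogN.const_mul_atTop (by norm_num : (0:ℝ) < 3/4)))
    refine tendsto_atTop_mono' atTop ?_ hbase
    filter_upwards [hxb, hxbn, hEsmall, eventually_ge_atTop 1, hLtop.eventually_ge_atTop 0]
      with N hxb hxbn hEs hN1 hL0
    have hNpos : (0:ℝ) < N := by exact_mod_cast hN1
    have hlow1 : Real.exp (-(2 * β) * (lam * Real.exp (bb N)) ^ n)
        ≤ 1 - F (lam * Real.exp (bb N)) := (hx0 _ hxb).2
    have hLsplit : Real.log (α * N) = Real.log α + Real.log N := by
      rw [Real.log_mul hα.ne' (by exact_mod_cast Nat.one_le_iff_ne_zero.mp hN1)]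
    have hargle : 3/4 * Real.log N + -(1/4) * Real.log α
        ≤ Real.log N + -(2 * β) * (lam * Real.exp (bb N)) ^ n := by
      have e1 : -(2 * β) * (lam * Real.exp (bb N)) ^ n
          = -(2 * Real.log (α * N) * Real.exp (-(n * Real.sqrt (dd N)))) := by
        rw [← hxbn]; ring
      rw [e1, hLsplit]
      have hE0 : 0 ≤ Real.exp (-(n * Real.sqrt (dd N))) := Real.exp_nonneg _
      rw [hLsplit] at hL0
      nlinarith
    calc Real.exp (3/4 * Real.log N + -(1/4) * Real.log α)
        ≤ Real.exp (Real.log N + -(2 * β) * (lam * Real.exp (bb N)) ^ n) :=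
          Real.exp_le_exp.mpr hargle
      _ = (N:ℝ) * Real.exp (-(2 * β) * (lam * Real.exp (bb N)) ^ n) := by
          rw [Real.exp_add, Real.exp_log hNpos]
      _ ≤ qq N := by
          simp only [hqq]
          have := hlow1
          nlinarith
  -- lower bound on the integral
  have hbb0 : ∀ᶠ N : ℕ in atTop, 0 ≤ bb N := hbbtop.eventually_ge_atTop 0
  have hlow : ∀ᶠ N : ℕ in atTop,
      bb N * (1 - Real.exp (-qq N)) ≤ ∫ ω, YY N ω ∂μ := by
    filter_upwards [hup, eventually_ge_atTop 1, hbb0, hxb] with N hup hN1 hbb0 hxb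
    obtain ⟨hint, -⟩ := hup
    set x := lam * Real.exp (bb N) with hx
    have hsub : {ω | YY N ω < bb N} ⊆ {ω | maxOver h N ω ≤ x} := by
      intro ω hω
      simp only [hYY, Set.mem_setOf_eq] at hω ⊢
      by_cases hcase : 1 ≤ maxOver h N ω / lam
      · rw [if_pos hcase] at hω
        have hpos : 0 < maxOver h N ω / lam := lt_of_lt_of_le one_pos hcase
        have h2 := (Real.log_lt_iff_lt_exp hpos).mp hω
        rw [div_lt_iff₀ hlam] at h2
        rw [hx]
        nlinarith
      · rw [if_neg hcase] at hω
        push_neg at hcase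
        rw [div_lt_one hlam] at hcase
        have h3 : (1:ℝ) ≤ Real.exp (bb N) := Real.one_le_exp hbb0
        rw [hx]
        nlinarith
    have hmeasle := meas_maxOver_le μ hindep hcdf hN1 x
    have hFbound : F x ≤ Real.exp (-(1 - F x)) := by
      have := Real.add_one_le_exp (-(1 - F x))
      linarith
    have h2 : μ {ω | YY N ω < bb N} ≤ ENNReal.ofReal (Real.exp (-qq N)) := by
      refine (measure_mono hsub).trans ?_
      rw [hmeasle]
      calc ENNReal.ofReal (F x) ^ N
          ≤ ENNReal.ofReal (Real.exp (-(1 - F x))) ^ N := by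
            exact pow_le_pow_left' (ENNReal.ofReal_le_ofReal hFbound) N
        _ = ENNReal.ofReal (Real.exp (-(1 - F x)) ^ N) :=
            (ENNReal.ofReal_pow (Real.exp_nonneg _) N).symm
        _ = ENNReal.ofReal (Real.exp (-qq N)) := by
            rw [← Real.exp_nat_mul]
            congr 1
            simp only [hqq, hx]
            ring
    have hcompl : {ω | bb N ≤ YY N ω} = {ω | YY N ω < bb N}ᶜ := by
      ext ω; simp [not_lt]
    have hp : 1 - Real.exp (-qq N) ≤ (μ {ω | bb N ≤ YY N ω}).toReal := by
      rw [hcompl, prob_compl_eq_one_sub (measurableSet_lt (hYm N) measurable_const),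
        ENNReal.toReal_sub_of_le prob_le_one ENNReal.one_ne_top, ENNReal.toReal_one]
      have h3 : (μ {ω | YY N ω < bb N}).toReal ≤ Real.exp (-qq N) :=
        ENNReal.toReal_le_of_le_ofReal (Real.exp_nonneg _) h2
      linarith
    calc bb N * (1 - Real.exp (-qq N)) ≤ bb N * (μ {ω | bb N ≤ YY N ω}).toReal :=
          mul_le_mul_of_nonneg_left hp hbb0
      _ ≤ ∫ ω, YY N ω ∂μ := lower_est μ (hYm N) hint (hY0 N) hbb0
  -- final assembly
  have hinv : Tendsto (fun N => (Real.sqrt (dd N))⁻¹) atTop (𝓝 0) := hsq.inv_tendsto_atTop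
  have hfrac : ∀ᶠ N : ℕ in atTop, Real.sqrt (dd N) / dd N = (Real.sqrt (dd N))⁻¹ := by
    filter_upwards [hddtop.eventually_gt_atTop 0] with N hd
    have h9 := div_mul_cancel_left₀ ((Real.sqrt_pos.mpr hd).ne') (Real.sqrt (dd N))
    rw [Real.mul_self_sqrt hd.le] at h9
    exact h9
  have hlo_t : Tendsto (fun N : ℕ => (bb N / dd N) * (1 - Real.exp (-qq N))) atTop (𝓝 1) := by
    have h1 : Tendsto (fun N : ℕ => bb N / dd N) atTop (𝓝 1) := by
      have heq : ∀ᶠ N : ℕ in atTop, bb N / dd N = 1 - (Real.sqrt (dd N))⁻¹ := by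
        filter_upwards [hddtop.eventually_gt_atTop 0, hfrac] with N hd hf
        simp only [hbb]
        rw [sub_div, div_self hd.ne', hf]
      refine Tendsto.congr' (heq.mono fun N hh => hh.symm) ?_
      simpa using tendsto_const_nhds.sub hinv
    have h2 : Tendsto (fun N : ℕ => 1 - Real.exp (-qq N)) atTop (𝓝 1) := by
      have h3 : Tendsto (fun N : ℕ => Real.exp (-qq N)) atTop (𝓝 0) :=
        Real.tendsto_exp_atBot.comp (tendsto_neg_atTop_atBot.comp hqtop)
      simpa using tendsto_const_nhds.sub h3
    simpa using h1.mul h2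
  have hhi_t : Tendsto (fun N : ℕ => (cc N + TT N) / dd N) atTop (𝓝 1) := by
    have h3 : Tendsto (fun N : ℕ => TT N * (dd N)⁻¹) atTop (𝓝 0) := by
      simpa using hTT0.mul hddtop.inv_tendsto_atTop
    have heq : ∀ᶠ N : ℕ in atTop,
        (cc N + TT N) / dd N = (1 + (Real.sqrt (dd N))⁻¹) + TT N * (dd N)⁻¹ := by
      filter_upwards [hddtop.eventually_gt_atTop 0, hfrac] with N hd hf
      simp only [hcc]
      rw [add_div, add_div, div_self hd.ne', hf, div_eq_mul_inv]
    refine Tendsto.congr' (heq.mono fun N hh => hh.symm) ?_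
    have h4 : Tendsto (fun N : ℕ => 1 + (Real.sqrt (dd N))⁻¹) atTop (𝓝 1) := by
      simpa using tendsto_const_nhds.add hinv
    simpa using h4.add h3
  refine tendsto_of_tendsto_of_tendsto_of_le_of_le' hlo_t hhi_t ?_ ?_
  · filter_upwards [hlow, hddtop.eventually_gt_atTop 0] with N hlow hd
    rw [div_mul_eq_mul_div]
    gcongr
  · filter_upwards [hup, hddtop.eventually_gt_atTop 0] with N hup hd
    gcongr
    exact hup.2
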